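/- Let G be a discrete abelian group and T the circle group. Every 2-cocycle μ ∈ Z²(G, T) determines an alternating bicharacter σ_μ(g,h) := μ(g,h) μ(h,g)⁻¹, and the map μ ↦ σ_μ induces an isomorphism from H²(G, T) onto the group of alternating bicharacters of G when G is free abelian of finite rank. -/

import Mathlib

def IsAddCocycle2 {G : Type*} [AddCommGroup G] {T : Type*} [AddCommGroup T]
    (μ : G → G → T) : Prop :=
  ∀ g h k : G, μ h k + μ g (h + k) = μ (g + h) k + μ g h

def IsAddCoboundary2 {G : Type*} [AddCommGroup G] {T : Type*} [AddCommGroup T]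
    (μ : G → G → T) : Prop :=
  ∃ c : G → T, ∀ g h : G, μ g h = c (g + h) - c g - c h

lemma basis_expand {n : ℕ} (g : Fin n → ℤ) :
    ∑ i, g i • (Pi.single i 1 : Fin n → ℤ) = g := by
  funext j
  simp [Finset.sum_apply, Pi.single_apply]

/-- The extension carrier. -/
structure ExtC (n : ℕ) where
  t : AddCircle (1 : ℝ)
  v : Fin n → ℤ

lemma symm_cocycle_coboundary {n : ℕ}
    (μ : (Fin n → ℤ) → (Fin n → ℤ) → AddCircle (1 : ℝ))
    (hc : IsAddCocycle2 μ) (hsym : ∀ g h, μ g h = μ h g) (hz : μ 0 0 = 0) :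
    IsAddCoboundary2 μ := by
  have h0r : ∀ g, μ g 0 = 0 := by
    intro g
    have := hc g 0 0
    simp only [add_zero] at this
    -- μ 0 0 + μ g 0 = μ g 0 + μ g 0
    have := add_left_cancel ((add_comm (μ g 0) (μ 0 0)).trans this)
    rw [← this, hz]
  have h0l : ∀ g, μ 0 g = 0 := by
    intro g
    have := hc 0 0 g
    simp only [zero_add, add_zero] at this
    -- μ 0 g + μ 0 g = μ 0 g + μ 0 0
    have := add_left_cancel this
    rw [this, hz]
  letI : Add (ExtC n) := ⟨fun x y => ⟨x.t + y.t + μ x.v y.v, x.v + y.v⟩⟩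
  letI : Zero (ExtC n) := ⟨⟨0, 0⟩⟩
  letI : Neg (ExtC n) := ⟨fun x => ⟨-x.t - μ x.v (-x.v), -x.v⟩⟩
  letI addG : AddGroup (ExtC n) := AddGroup.ofLeftAxioms
    (by
      rintro ⟨t, g⟩ ⟨s, h⟩ ⟨u, k⟩
      show ExtC.mk (t + s + μ g h + u + μ (g + h) k) (g + h + k)
          = ExtC.mk (t + (s + u + μ h k) + μ g (h + k)) (g + (h + k))
      congr 1
      · have h1 := hc g h k
        have : μ (g + h) k = μ h k + μ g (h + k) - μ g h := eq_sub_of_add_eq h1.symm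
        rw [this]; abel
      · exact add_assoc g h k)
    (by
      rintro ⟨t, g⟩
      show ExtC.mk (0 + t + μ 0 g) (0 + g) = ExtC.mk t g
      congr 1
      · rw [h0l]; abel
      · exact zero_add g)
    (by
      rintro ⟨t, g⟩
      show ExtC.mk (-t - μ g (-g) + t + μ (-g) g) (-g + g) = ExtC.mk 0 0
      congr 1
      · rw [hsym (-g) g]; abel
      · exact neg_add_cancel g)
  letI : AddCommGroup (ExtC n) :=
    { addG with
      add_comm := by
        rintro ⟨t, g⟩ ⟨s, h⟩
        show ExtC.mk (t + s + μ g h) (g + h) = ExtC.mk (s + t + μ h g) (h + g)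
        congr 1
        · rw [hsym g h]; abel
        · exact add_comm g h }
  classical
  set x : Fin n → ExtC n := fun i => ⟨0, Pi.single i 1⟩ with hx
  set L : (Fin n → ℤ) → ExtC n := fun g => ∑ i, g i • x i with hL
  have Ladd : ∀ g h, L (g + h) = L g + L h := by
    intro g h
    rw [hL]
    simp only
    rw [← Finset.sum_add_distrib]
    refine Finset.sum_congr rfl fun i _ => ?_
    show (g i + h i) • x i = g i • x i + h i • x i
    exact add_zsmul _ _ _
  let π : ExtC n →+ (Fin n → ℤ) := AddMonoidHom.mk' ExtC.v (fun a b => rfl)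
  have Lsnd : ∀ g, (L g).v = g := by
    intro g
    show π (L g) = g
    rw [hL]
    simp only
    rw [map_sum]
    simp only [map_zsmul]
    have : ∀ i : Fin n, π (x i) = Pi.single i 1 := fun i => rfl
    simp only [this]
    exact basis_expand g
  refine ⟨fun g => (L g).t, ?_⟩
  intro g h
  show μ g h = (L (g + h)).t - (L g).t - (L h).t
  have h2 : (L (g + h)).t = (L g).t + (L h).t + μ (L g).v (L h).v := by
    rw [Ladd]; rfl
  rw [Lsnd, Lsnd] at h2
  rw [h2]; abel

lemma sigma_add_left {G T : Type*} [AddCommGroup G] [AddCommGroup T]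
    (μ : G → G → T) (hc : IsAddCocycle2 μ) (g g' h : G) :
    μ (g + g') h - μ h (g + g') = (μ g h - μ h g) + (μ g' h - μ h g') := by
  have h1 := hc g g' h
  have h2 := hc h g g'
  have h3 := hc g h g'
  rw [add_comm h g] at h2
  rw [add_comm h g'] at h3
  have e1 : μ (g + g') h = μ g' h + μ g (g' + h) - μ g g' :=
    eq_sub_of_add_eq h1.symm
  have e2 : μ h (g + g') = μ (g + h) g' + μ h g - μ g g' :=
    eq_sub_of_add_eq ((add_comm _ _).trans h2)
  have e3 : μ g (g' + h) = μ (g + h) g' + μ g h - μ h g' :=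
    eq_sub_of_add_eq ((add_comm _ _).trans h3)
  rw [e1, e3, e2]
  abel

lemma surj_part {n : ℕ} (σ : (Fin n → ℤ) → (Fin n → ℤ) → AddCircle (1 : ℝ))
    (haddl : ∀ g g' h, σ (g + g') h = σ g h + σ g' h)
    (haddr : ∀ g h h', σ g (h + h') = σ g h + σ g h')
    (halt : ∀ g, σ g g = 0) :
    ∃ μ : (Fin n → ℤ) → (Fin n → ℤ) → AddCircle (1 : ℝ), IsAddCocycle2 μ ∧
      ∀ g h, σ g h = μ g h - μ h g := by
  classical
  have hanti : ∀ x y : Fin n → ℤ, σ y x = -σ x y := by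
    intro x y
    have h := halt (x + y)
    rw [haddl, haddr, haddr, halt x, halt y, zero_add, add_zero] at h
    have h' : σ y x + σ x y = 0 := by rw [add_comm]; exact h
    exact eq_neg_of_add_eq_zero_left h'
  set e : Fin n → (Fin n → ℤ) := fun i => Pi.single i 1 with he
  set S : Fin n → Fin n → AddCircle (1 : ℝ) :=
    fun i j => if i < j then σ (e i) (e j) else 0 with hS
  have key : ∀ x y : Fin n → ℤ, σ x y = ∑ i, ∑ j, (x i * y j) • σ (e i) (e j) := by
    intro x y
    let F : (Fin n → ℤ) →+ AddCircle (1 : ℝ) :=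
      AddMonoidHom.mk' (fun z => σ z y) (fun a b => haddl a b y)
    have h1 : σ x y = ∑ i, x i • σ (e i) y := by
      conv_lhs => rw [← basis_expand x]
      have hF := map_sum F (fun i => x i • e i) Finset.univ
      simp only [map_zsmul] at hF
      exact hF
    rw [h1]
    refine Finset.sum_congr rfl fun i _ => ?_
    let G : (Fin n → ℤ) →+ AddCircle (1 : ℝ) :=
      AddMonoidHom.mk' (σ (e i)) (haddr (e i))
    have h2 : σ (e i) y = ∑ j, y j • σ (e i) (e j) := by
      conv_lhs => rw [← basis_expand y]
      have hG := map_sum G (fun j => y j • e j) Finset.univ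
      simp only [map_zsmul] at hG
      exact hG
    rw [h2, Finset.smul_sum]
    refine Finset.sum_congr rfl fun j _ => ?_
    rw [smul_smul]
  refine ⟨fun g h => ∑ i, ∑ j, (g i * h j) • S i j, ?_, ?_⟩
  · intro g h k
    rw [← Finset.sum_add_distrib, ← Finset.sum_add_distrib]
    refine Finset.sum_congr rfl fun i _ => ?_
    rw [← Finset.sum_add_distrib, ← Finset.sum_add_distrib]
    refine Finset.sum_congr rfl fun j _ => ?_
    rw [← add_zsmul, ← add_zsmul]
    congr 1
    simp only [Pi.add_apply]
    ring
  · intro g h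
    have hdiff : ∀ i j : Fin n, S i j - S j i = σ (e i) (e j) := by
      intro i j
      rcases lt_trichotomy i j with hij | hij | hij
      · rw [hS]
        simp only [if_pos hij, if_neg (not_lt_of_gt hij)]
        exact sub_zero _
      · subst hij
        rw [hS]
        simp only [lt_irrefl, if_neg (lt_irrefl i)]
        rw [sub_self, halt]
      · rw [hS]
        simp only [if_neg (not_lt_of_gt hij), if_pos hij]
        rw [zero_sub, hanti, neg_neg]
    have hswap : (∑ i, ∑ j, (h i * g j) • S i j)
        = ∑ i, ∑ j, (g i * h j) • S j i := by
      rw [Finset.sum_comm]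
      refine Finset.sum_congr rfl fun i _ => ?_
      refine Finset.sum_congr rfl fun j _ => ?_
      rw [mul_comm]
    show σ g h = (∑ i, ∑ j, (g i * h j) • S i j) - ∑ i, ∑ j, (h i * g j) • S i j
    rw [hswap, ← Finset.sum_sub_distrib]
    rw [key g h]
    refine Finset.sum_congr rfl fun i _ => ?_
    rw [← Finset.sum_sub_distrib]
    refine Finset.sum_congr rfl fun j _ => ?_
    rw [← smul_sub, hdiff]

/-- for `G = ℤⁿ` and `T` the circle, `μ ↦ σ_μ` with
`σ_μ(g,h) = μ(g,h) - μ(h,g)` induces an isomorphism of `H²(G,T)` onto the group of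
alternating bicharacters of `G`. -/
theorem stmt5 (n : ℕ) :
    -- σ_μ is an alternating bicharacter:
    (∀ μ : (Fin n → ℤ) → (Fin n → ℤ) → AddCircle (1 : ℝ), IsAddCocycle2 μ →
      (∀ g g' h : Fin n → ℤ,
        μ (g + g') h - μ h (g + g') = (μ g h - μ h g) + (μ g' h - μ h g')) ∧
      (∀ g h h' : Fin n → ℤ,
        μ g (h + h') - μ (h + h') g = (μ g h - μ h g) + (μ g h' - μ h' g)) ∧
      (∀ g : Fin n → ℤ, μ g g - μ g g = 0)) ∧
    -- coboundaries have trivial σ (so σ descends to H²(G,T)):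
    (∀ μ : (Fin n → ℤ) → (Fin n → ℤ) → AddCircle (1 : ℝ), IsAddCoboundary2 μ →
      ∀ g h : Fin n → ℤ, μ g h - μ h g = 0) ∧
    -- injectivity: if σ_μ = 0 then μ is a coboundary:
    (∀ μ : (Fin n → ℤ) → (Fin n → ℤ) → AddCircle (1 : ℝ), IsAddCocycle2 μ →
      (∀ g h : Fin n → ℤ, μ g h - μ h g = 0) → IsAddCoboundary2 μ) ∧
    -- surjectivity: every alternating bicharacter arises as σ_μ:
    (∀ σ : (Fin n → ℤ) → (Fin n → ℤ) → AddCircle (1 : ℝ),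
      (∀ g g' h, σ (g + g') h = σ g h + σ g' h) →
      (∀ g h h', σ g (h + h') = σ g h + σ g h') →
      (∀ g, σ g g = 0) →
      ∃ μ : (Fin n → ℤ) → (Fin n → ℤ) → AddCircle (1 : ℝ), IsAddCocycle2 μ ∧
        ∀ g h, σ g h = μ g h - μ h g) := by
  refine ⟨?_, ?_, ?_, ?_⟩
  · -- part 1
    intro μ hc
    refine ⟨sigma_add_left μ hc, ?_, fun g => sub_self _⟩
    intro g h h'
    have h4 := sigma_add_left μ hc h h' g
    have h5 : μ g (h + h') - μ (h + h') g
        = -((μ h g - μ g h) + (μ h' g - μ g h')) := by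
      rw [← h4]; abel
    rw [h5]; abel
  · -- part 2
    rintro μ ⟨c, hcb⟩ g h
    rw [hcb g h, hcb h g, add_comm h g]
    abel
  · -- part 3
    intro μ hc hσ
    have hsym : ∀ g h, μ g h = μ h g := fun g h => sub_eq_zero.mp (hσ g h)
    have hc' : IsAddCocycle2 (fun g h => μ g h - μ 0 0) := by
      intro g h k
      simp only
      rw [sub_add_sub_comm, sub_add_sub_comm, hc g h k]
    obtain ⟨c, hcb⟩ := symm_cocycle_coboundary _ hc'
      (fun g h => by simp only [hsym g h]) (by simp only [sub_self])
    refine ⟨fun g => c g - μ 0 0, ?_⟩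
    intro g h
    have h1 : μ g h - μ 0 0 = c (g + h) - c g - c h := hcb g h
    have h2 : μ g h = c (g + h) - c g - c h + μ 0 0 := eq_add_of_sub_eq h1
    rw [h2]; show _ = (c (g + h) - μ 0 0) - (c g - μ 0 0) - (c h - μ 0 0); abel
  · -- part 4
    exact surj_part
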